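/- Suppose q ≠ 1. Let P = Σ_{j=0}^m p_j(M) D_q^j with m ≥ 0 and p_m ≠ 0, let α ∈ K be nonzero, let s ≥ 1, and fix a Jordan chain (Ψ_{β,r})_{r≥1} at each nonzero β ∈ K. Then P Ψ_{α,s} − (q^{m(m−2s+3)/2}/(α^m (q−1)^m)) · p_m(α/q^m) · Ψ_{α/q^m, s} lies in the K-linear span of {Ψ_{α/q^m, r} : 1 ≤ r < s} ∪ {Ψ_{α/q^i, r} : 0 ≤ i < m, 1 ≤ r ≤ s}. (Here m(m−2s+3)/2 is an integer, possibly negative, and q^{m(m−2s+3)/2} is the corresponding integer power of the invertible element q.) -/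

import Mathlib

open Polynomial
open scoped Classical

noncomputable section

/-- The q-integer {n}_q. -/
def qInt (K : Type*) [Field K] (q : K) (n : ℤ) : K :=
  if q = 1 then (n : K) else (q ^ n - 1) / (q - 1)

/-- The multiplication operator `M` on formal Laurent series `L = ℤ → K`:
`(M a)(n) = a(n-1)`. -/
def Mop (K : Type*) [Field K] : Module.End K (ℤ → K) where
  toFun a := fun n => a (n - 1)
  map_add' _ _ := rfl
  map_smul' _ _ := rfl

/-- The q-difference operator `D_q` on `L = ℤ → K`: `(D_q a)(n) = {n+1}_q · a(n+1)`. -/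
def Dq (K : Type*) [Field K] (q : K) : Module.End K (ℤ → K) where
  toFun a := fun n => qInt K q (n + 1) * a (n + 1)
  map_add' x y := by funext n; simp [Pi.add_apply, mul_add]
  map_smul' c x := by funext n; simp [Pi.smul_apply, smul_eq_mul]; ring

/-- The element `Ψ_{α,1} ∈ L`, `Ψ_{α,1}(n) = α^{-n}`. -/
def Psi1 (K : Type*) [Field K] (α : K) : ℤ → K := fun n => α ^ (-n)

/-- A Jordan chain at `α`: a sequence `(Ψ_{α,s})_{s ≥ 1}` with first term `Ψ_{α,1}`
and `(M - α·id) Ψ_{α,s} = Ψ_{α,s-1}` for `s ≥ 2`. -/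
def IsJordanChain (K : Type*) [Field K] (α : K) (Ψ : ℕ → ℤ → K) : Prop :=
  Ψ 1 = Psi1 K α ∧ ∀ s : ℕ, 2 ≤ s → Mop K (Ψ s) - α • Ψ s = Ψ (s - 1)

namespace JCAux

variable {K : Type*} [Field K]

/-- shift-forward operator -/
def Eop (K : Type*) [Field K] : Module.End K (ℤ → K) where
  toFun a := fun n => a (n + 1)
  map_add' _ _ := rfl
  map_smul' _ _ := rfl

/-- diagonal q^n operator -/
def Sop (K : Type*) [Field K] (q : K) : Module.End K (ℤ → K) where
  toFun a := fun n => q ^ n * a n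
  map_add' x y := by funext n; simp [Pi.add_apply, mul_add]
  map_smul' c x := by funext n; simp [Pi.smul_apply, smul_eq_mul]; ring

/-- span of chain elements with index between 1 and t -/
def W (Φ : ℕ → ℤ → K) (t : ℕ) : Submodule K (ℤ → K) :=
  Submodule.span K {x | ∃ r, 1 ≤ r ∧ r ≤ t ∧ x = Φ r}

lemma mem_W {Φ : ℕ → ℤ → K} {t r : ℕ} (h1 : 1 ≤ r) (h2 : r ≤ t) : Φ r ∈ W Φ t :=
  Submodule.subset_span ⟨r, h1, h2, rfl⟩

lemma W_mono {Φ : ℕ → ℤ → K} {t t' : ℕ} (h : t ≤ t') : W Φ t ≤ W Φ t' :=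
  Submodule.span_mono (fun x ⟨r, h1, h2, hx⟩ => ⟨r, h1, h2.trans h, hx⟩)


lemma M1 {β : K} (hβ : β ≠ 0) {Φ : ℕ → ℤ → K} (hΦ : IsJordanChain K β Φ) :
    Mop K (Φ 1) = β • Φ 1 := by
  rw [hΦ.1]
  funext n
  show (β : K) ^ (-(n-1)) = β • Psi1 K β n
  have : -(n-1) = -n + 1 := by ring
  rw [this, zpow_add_one₀ hβ]
  simp [Psi1, Pi.smul_apply, smul_eq_mul, mul_comm]

lemma Ms {β : K} {Φ : ℕ → ℤ → K} (hΦ : IsJordanChain K β Φ) (t : ℕ) :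
    Mop K (Φ (t+2)) = β • Φ (t+2) + Φ (t+1) := by
  have := hΦ.2 (t+2) (by omega)
  simp only [show t + 2 - 1 = t + 1 from rfl] at this
  rw [← this]; abel

lemma M_W {β : K} (hβ : β ≠ 0) {Φ : ℕ → ℤ → K} (hΦ : IsJordanChain K β Φ)
    {t : ℕ} {x : ℤ → K} (hx : x ∈ W Φ t) : Mop K x ∈ W Φ t := by
  induction hx using Submodule.span_induction with
  | mem x hx =>
    obtain ⟨r, h1, h2, rfl⟩ := hx
    match r, h1 with
    | 1, _ => rw [M1 hβ hΦ]; exact Submodule.smul_mem _ _ (mem_W le_rfl h2)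
    | (u+2), _ =>
      rw [Ms hΦ u]
      exact Submodule.add_mem _ (Submodule.smul_mem _ _ (mem_W (by omega) h2))
        (mem_W (by omega) (by omega))
  | zero => simpa using Submodule.zero_mem _
  | add x y _ _ hx hy => rw [map_add]; exact Submodule.add_mem _ hx hy
  | smul c x _ hx => rw [map_smul]; exact Submodule.smul_mem _ _ hx

lemma aeval_W {β : K} (hβ : β ≠ 0) {Φ : ℕ → ℤ → K} (hΦ : IsJordanChain K β Φ)
    {t : ℕ} (p : K[X]) {x : ℤ → K} (hx : x ∈ W Φ t) :
    aeval (Mop K) p x ∈ W Φ t := by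
  induction p using Polynomial.induction_on' with
  | add p q hp hq => rw [map_add, LinearMap.add_apply]; exact Submodule.add_mem _ hp hq
  | monomial n a =>
    rw [aeval_monomial]
    simp only [Module.End.mul_apply, LinearMap.smul_apply]
    have hMn : (Mop K ^ n) x ∈ W Φ t := by
      induction n with
      | zero => simpa using hx
      | succ k ih =>
        rw [pow_succ', Module.End.mul_apply]
        exact M_W hβ hΦ ih
    have : ((algebraMap K (Module.End K (ℤ → K))) a) ((Mop K ^ n) x)
        = a • ((Mop K ^ n) x) := by
      simp [Module.algebraMap_end_apply]
    rw [this]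
    exact Submodule.smul_mem _ _ hMn

lemma poly_step {β : K} (hβ : β ≠ 0) {Φ : ℕ → ℤ → K} (hΦ : IsJordanChain K β Φ)
    (p : K[X]) (t : ℕ) :
    aeval (Mop K) p (Φ (t+1)) - p.eval β • Φ (t+1) ∈ W Φ t := by
  obtain ⟨g, hg⟩ := Polynomial.X_sub_C_dvd_sub_C_eval (a := β) (p := p)
  have h2 : aeval (Mop K) p - algebraMap K (Module.End K (ℤ → K)) (p.eval β)
      = aeval (Mop K) g * (Mop K - algebraMap K (Module.End K (ℤ → K)) β) := by
    calc aeval (Mop K) p - algebraMap K (Module.End K (ℤ → K)) (p.eval β)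
        = aeval (Mop K) (p - C (p.eval β)) := by simp [map_sub, aeval_C]
      _ = aeval (Mop K) (g * (X - C β)) := by rw [hg, mul_comm]
      _ = aeval (Mop K) g * (Mop K - algebraMap K (Module.End K (ℤ → K)) β) := by
          simp [map_mul, map_sub, aeval_X, aeval_C]
  have h3 := congrArg (fun (f : Module.End K (ℤ → K)) => f (Φ (t+1))) h2
  simp only [LinearMap.sub_apply, Module.End.mul_apply, Module.algebraMap_end_apply] at h3
  rw [h3]
  match t with
  | 0 =>
    have : Mop K (Φ 1) - β • Φ 1 = 0 := by rw [M1 hβ hΦ]; abel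
    rw [this, map_zero]; exact Submodule.zero_mem _
  | (u+1) =>
    have : Mop K (Φ (u+2)) - β • Φ (u+2) = Φ (u+1) := by rw [Ms hΦ u]; abel
    rw [this]
    exact aeval_W hβ hΦ g (mem_W (by omega) le_rfl)


lemma E_step {β : K} (hβ : β ≠ 0) {Φ : ℕ → ℤ → K} (hΦ : IsJordanChain K β Φ) (t : ℕ) :
    Eop K (Φ (t+1)) - β⁻¹ • Φ (t+1) ∈ W Φ t := by
  induction t with
  | zero =>
    have : Eop K (Φ 1) = β⁻¹ • Φ 1 := by
      rw [hΦ.1]; funext n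
      show (β : K) ^ (-(n+1)) = β⁻¹ • Psi1 K β n
      have : -(n+1) = -n + (-1) := by ring
      rw [this, zpow_add₀ hβ, zpow_neg_one]
      simp [Psi1, Pi.smul_apply, smul_eq_mul, mul_comm]
    rw [this]; simpa using Submodule.zero_mem _
  | succ u ih =>
    have h1 : Φ (u+2) = β • Eop K (Φ (u+2)) + Eop K (Φ (u+1)) := by
      have h0 := congrArg (Eop K) (Ms hΦ u)
      rw [map_add, map_smul] at h0
      have hEM : Eop K (Mop K (Φ (u+2))) = Φ (u+2) := by
        funext n; show Φ (u+2) (n + 1 - 1) = Φ (u+2) n; norm_num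
      rw [hEM] at h0; exact h0
    have h2 : Eop K (Φ (u+2)) - β⁻¹ • Φ (u+2) = -(β⁻¹ • Eop K (Φ (u+1))) := by
      have := congrArg (fun x => β⁻¹ • x) h1
      simp only [smul_add, smul_smul, inv_mul_cancel₀ hβ, one_smul] at this
      rw [this]; abel
    rw [h2]
    have h3 : Eop K (Φ (u+1)) ∈ W Φ (u+1) := by
      have := ih
      have h4 : Eop K (Φ (u+1)) = (Eop K (Φ (u+1)) - β⁻¹ • Φ (u+1)) + β⁻¹ • Φ (u+1) := by abel
      rw [h4]
      exact Submodule.add_mem _ (W_mono (by omega) ih)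
        (Submodule.smul_mem _ _ (mem_W (by omega) (by omega)))
    exact Submodule.neg_mem _ (Submodule.smul_mem _ _ h3)

lemma E_W {β : K} (hβ : β ≠ 0) {Φ : ℕ → ℤ → K} (hΦ : IsJordanChain K β Φ)
    {t : ℕ} {x : ℤ → K} (hx : x ∈ W Φ t) : Eop K x ∈ W Φ t := by
  induction hx using Submodule.span_induction with
  | mem x hx =>
    obtain ⟨r, h1, h2, rfl⟩ := hx
    obtain ⟨u, rfl⟩ : ∃ u, r = u + 1 := ⟨r - 1, by omega⟩
    have h4 : Eop K (Φ (u+1)) = (Eop K (Φ (u+1)) - β⁻¹ • Φ (u+1)) + β⁻¹ • Φ (u+1) := by abel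
    rw [h4]
    exact Submodule.add_mem _ (W_mono (by omega) (E_step hβ hΦ u))
      (Submodule.smul_mem _ _ (mem_W (by omega) h2))
  | zero => simpa using Submodule.zero_mem _
  | add x y _ _ hx hy => rw [map_add]; exact Submodule.add_mem _ hx hy
  | smul c x _ hx => rw [map_smul]; exact Submodule.smul_mem _ _ hx

/-- kernel of M - γ -/
lemma ker_M {γ : K} (hγ : γ ≠ 0) {a : ℤ → K} (ha : Mop K a = γ • a) :
    a = a 0 • Psi1 K γ := by
  have key : ∀ n : ℤ, a (n - 1) = γ * a n := fun n =>
    congrFun ha n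
  funext n
  show a n = a 0 * γ ^ (-n)
  induction n using Int.induction_on with
  | zero => simp
  | succ k ih =>
    have := key (k + 1)
    have hzp : (γ:K) ^ (-(k+1:ℤ)) = γ ^ (-(k:ℤ)) * γ⁻¹ := by
      rw [show -(k+1:ℤ) = -k + (-1) by ring, zpow_add₀ hγ, zpow_neg_one]
    have hk : a ((k:ℤ) + 1 - 1) = a k := by norm_num
    rw [hk] at this
    rw [hzp, ← mul_assoc, ← ih]
    field_simp [this]
    rw [this]; ring
  | pred k ih =>
    have := key (-k)
    have hzp : (γ:K) ^ (-(-(k:ℤ)-1)) = γ * γ ^ ((k:ℤ)) := by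
      rw [show -(-(k:ℤ)-1) = (k:ℤ) + 1 by ring, zpow_add_one₀ hγ]; ring
    have : a (-(k:ℤ) - 1) = γ * a (-(k:ℤ)) := this
    rw [this, ih]
    rw [show -(-(k:ℤ)) = (k:ℤ) by ring] at *
    rw [hzp]; ring

/-- lifting lemma: if (M - γ) u ∈ W Φ' t then u ∈ W Φ' (t+1) -/
lemma lift {γ : K} (hγ : γ ≠ 0) {Φ' : ℕ → ℤ → K} (hΦ' : IsJordanChain K γ Φ')
    {t : ℕ} {u : ℤ → K} (hu : Mop K u - γ • u ∈ W Φ' t) : u ∈ W Φ' (t+1) := by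
  have hsub : W Φ' t ≤ Submodule.map (Mop K - γ • (1 : Module.End K (ℤ → K))) (W Φ' (t+1)) := by
    rw [W, Submodule.span_le]
    rintro x ⟨r, h1, h2, rfl⟩
    refine ⟨Φ' (r+1), mem_W (by omega) (by omega), ?_⟩
    obtain ⟨v, rfl⟩ : ∃ v, r = v + 1 := ⟨r - 1, by omega⟩
    show Mop K (Φ' (v+2)) - γ • Φ' (v+2) = Φ' (v+1)
    rw [Ms hΦ' v]; abel
  obtain ⟨w, hw, hww⟩ := hsub hu
  have hww' : Mop K w - γ • w = Mop K u - γ • u := hww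
  have h0 : Mop K (u - w) - γ • (u - w) = 0 := by
    rw [map_sub, smul_sub]
    have : (Mop K) u - (Mop K) w - (γ • u - γ • w)
        = ((Mop K) u - γ • u) - ((Mop K) w - γ • w) := by abel
    rw [this, hww', sub_self]
  have hker : Mop K (u - w) = γ • (u - w) := by rwa [sub_eq_zero] at h0
  have huw : u - w = (u - w) 0 • Φ' 1 := by rw [hΦ'.1]; exact ker_M hγ hker
  have : u = w + (u - w) 0 • Φ' 1 := by rw [← huw]; abel
  rw [this]
  exact Submodule.add_mem _ hw (Submodule.smul_mem _ _ (mem_W le_rfl (by omega)))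


lemma MS_comm (q : K) (hq : q ≠ 0) (a : ℤ → K) :
    Mop K (Sop K q a) = q⁻¹ • Sop K q (Mop K a) := by
  funext n
  show q ^ (n-1) * a (n-1) = q⁻¹ • (q ^ n * a (n-1))
  rw [show (n-1:ℤ) = n + (-1) by ring, zpow_add₀ hq, zpow_neg_one]
  simp [smul_eq_mul]; ring

lemma S_step (q : K) (hq : q ≠ 0) {β : K} (hβ : β ≠ 0) {Φ : ℕ → ℤ → K}
    (hΦ : IsJordanChain K β Φ) {Φ' : ℕ → ℤ → K} (hΦ' : IsJordanChain K (β/q) Φ') (t : ℕ) :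
    Sop K q (Φ (t+1)) - (q ^ (-(t:ℤ))) • Φ' (t+1) ∈ W Φ' t := by
  have hβq : β / q ≠ 0 := div_ne_zero hβ hq
  induction t with
  | zero =>
    have h1 : Sop K q (Φ 1) = Φ' 1 := by
      rw [hΦ.1, hΦ'.1]; funext n
      show q ^ n * β ^ (-n) = (β/q) ^ (-n)
      rw [div_zpow, zpow_neg, zpow_neg]; field_simp
    rw [h1]; simp
  | succ u ih =>
    apply lift hβq hΦ' (t := u)
    have hMx : Mop K (Sop K q (Φ (u+2))) = (β/q) • Sop K q (Φ (u+2))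
        + q⁻¹ • Sop K q (Φ (u+1)) := by
      rw [MS_comm q hq, Ms hΦ u, map_add, map_smul, smul_add, smul_smul]
      rw [show q⁻¹ * β = β / q by field_simp]
    have hM' : Mop K (Φ' (u+2)) = (β/q) • Φ' (u+2) + Φ' (u+1) := Ms hΦ' u
    have hc : (q : K) ^ (-((u:ℤ)+1)) = q⁻¹ * q ^ (-(u:ℤ)) := by
      rw [show -((u:ℤ)+1) = (-1) + (-(u:ℤ)) by ring, zpow_add₀ hq, zpow_neg_one]
    have key : Mop K (Sop K q (Φ (u+2)) - (q ^ (-((u:ℤ)+1))) • Φ' (u+2))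
        - (β/q) • (Sop K q (Φ (u+2)) - (q ^ (-((u:ℤ)+1))) • Φ' (u+2))
        = q⁻¹ • (Sop K q (Φ (u+1)) - (q ^ (-(u:ℤ))) • Φ' (u+1)) := by
      rw [map_sub, map_smul, hMx, hM', hc]
      module
    rw [show (-((u:ℤ)+1)) = (-((u+1:ℕ):ℤ)) by push_cast; ring] at key
    rw [key]
    exact Submodule.smul_mem _ _ ih

lemma S_W (q : K) (hq : q ≠ 0) {β : K} (hβ : β ≠ 0) {Φ : ℕ → ℤ → K}
    (hΦ : IsJordanChain K β Φ) {Φ' : ℕ → ℤ → K} (hΦ' : IsJordanChain K (β/q) Φ')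
    {t : ℕ} {x : ℤ → K} (hx : x ∈ W Φ t) : Sop K q x ∈ W Φ' t := by
  induction hx using Submodule.span_induction with
  | mem x hx =>
    obtain ⟨r, h1, h2, rfl⟩ := hx
    obtain ⟨u, rfl⟩ : ∃ u, r = u + 1 := ⟨r - 1, by omega⟩
    have h4 : Sop K q (Φ (u+1)) = (Sop K q (Φ (u+1)) - (q ^ (-(u:ℤ))) • Φ' (u+1))
        + (q ^ (-(u:ℤ))) • Φ' (u+1) := by abel
    rw [h4]
    exact Submodule.add_mem _ (W_mono (by omega) (S_step q hq hβ hΦ hΦ' u))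
      (Submodule.smul_mem _ _ (mem_W (by omega) h2))
  | zero => simpa using Submodule.zero_mem _
  | add x y _ _ hx hy => rw [map_add]; exact Submodule.add_mem _ hx hy
  | smul c x _ hx => rw [map_smul]; exact Submodule.smul_mem _ _ hx

lemma Dq_eq (q : K) (hq : q ≠ 0) (hq1 : q ≠ 1) (a : ℤ → K) :
    Dq K q a = (q-1)⁻¹ • (q • Sop K q (Eop K a) - Eop K a) := by
  have hq1' : q - 1 ≠ 0 := sub_ne_zero.mpr hq1
  funext n
  show qInt K q (n+1) * a (n+1) = (q-1)⁻¹ * (q * (q ^ n * a (n+1)) - a (n+1))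
  rw [qInt, if_neg hq1, zpow_add_one₀ hq]
  field_simp

lemma Dq_step (q : K) (hq : q ≠ 0) (hq1 : q ≠ 1) {β : K} (hβ : β ≠ 0) {Φ : ℕ → ℤ → K}
    (hΦ : IsJordanChain K β Φ) {Φ' : ℕ → ℤ → K} (hΦ' : IsJordanChain K (β/q) Φ') (t : ℕ) :
    Dq K q (Φ (t+1)) - (q ^ ((1:ℤ) - t) / (β * (q-1))) • Φ' (t+1)
      ∈ W Φ' t ⊔ W Φ (t+1) := by
  have hq1' : q - 1 ≠ 0 := sub_ne_zero.mpr hq1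
  set w : ℤ → K := Eop K (Φ (t+1)) - β⁻¹ • Φ (t+1) with hwdef
  have hw : w ∈ W Φ t := E_step hβ hΦ t
  set w' : ℤ → K := Sop K q (Φ (t+1)) - (q ^ (-(t:ℤ))) • Φ' (t+1) with hw'def
  have hw' : w' ∈ W Φ' t := S_step q hq hβ hΦ hΦ' t
  have hE : Eop K (Φ (t+1)) = β⁻¹ • Φ (t+1) + w := by rw [hwdef]; abel
  have hS' : Sop K q (Φ (t+1)) = (q ^ (-(t:ℤ))) • Φ' (t+1) + w' := by rw [hw'def]; abel
  have hSE : Sop K q (Eop K (Φ (t+1)))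
      = β⁻¹ • ((q ^ (-(t:ℤ))) • Φ' (t+1) + w') + Sop K q w := by
    rw [hE, map_add, map_smul, hS']
  have hc : q ^ ((1:ℤ) - t) / (β * (q-1)) = (q-1)⁻¹ * (q * (β⁻¹ * q ^ (-(t:ℤ)))) := by
    rw [show ((1:ℤ) - t) = 1 + (-(t:ℤ)) by ring, zpow_add₀ hq, zpow_one]
    field_simp
  have key : Dq K q (Φ (t+1)) - (q ^ ((1:ℤ) - t) / (β * (q-1))) • Φ' (t+1)
      = (q-1)⁻¹ • (q • (β⁻¹ • w' + Sop K q w) - w) - ((q-1)⁻¹ * β⁻¹) • Φ (t+1) := by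
    rw [Dq_eq q hq hq1, hSE, hE, hc]
    module
  rw [key]
  apply Submodule.sub_mem
  · apply Submodule.smul_mem
    apply Submodule.sub_mem
    · apply Submodule.smul_mem
      exact Submodule.add_mem _
        (Submodule.mem_sup_left (Submodule.smul_mem _ _ hw'))
        (Submodule.mem_sup_left (S_W q hq hβ hΦ hΦ' hw))
    · exact Submodule.mem_sup_right (W_mono (by omega) hw)
  · exact Submodule.smul_mem _ _ (Submodule.mem_sup_right (mem_W (by omega) le_rfl))

lemma Dq_W (q : K) (hq : q ≠ 0) (hq1 : q ≠ 1) {β : K} (hβ : β ≠ 0) {Φ : ℕ → ℤ → K}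
    (hΦ : IsJordanChain K β Φ) {Φ' : ℕ → ℤ → K} (hΦ' : IsJordanChain K (β/q) Φ')
    {t : ℕ} {x : ℤ → K} (hx : x ∈ W Φ t) : Dq K q x ∈ W Φ' t ⊔ W Φ t := by
  induction hx using Submodule.span_induction with
  | mem x hx =>
    obtain ⟨r, h1, h2, rfl⟩ := hx
    obtain ⟨u, rfl⟩ : ∃ u, r = u + 1 := ⟨r - 1, by omega⟩
    have h4 : Dq K q (Φ (u+1)) = (Dq K q (Φ (u+1))
        - (q ^ ((1:ℤ) - u) / (β * (q-1))) • Φ' (u+1))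
        + (q ^ ((1:ℤ) - u) / (β * (q-1))) • Φ' (u+1) := by abel
    rw [h4]
    refine Submodule.add_mem _ ?_
      (Submodule.mem_sup_left (Submodule.smul_mem _ _ (mem_W (by omega) h2)))
    refine SetLike.le_def.mp (sup_le_sup (W_mono (by omega)) (W_mono (by omega)))
      (Dq_step q hq hq1 hβ hΦ hΦ' u)
  | zero => simpa using Submodule.zero_mem _
  | add x y _ _ hx hy => rw [map_add]; exact Submodule.add_mem _ hx hy
  | smul c x _ hx => rw [map_smul]; exact Submodule.smul_mem _ _ hx

end JCAux

/-- exponent recursion -/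
def Eexp (t₀ : ℕ) : ℕ → ℤ
  | 0 => 0
  | (j+1) => Eexp t₀ j + (1 - t₀ + j)

lemma two_Eexp (t₀ : ℕ) : ∀ j : ℕ, 2 * Eexp t₀ j = j * ((j : ℤ) - 2*((t₀:ℤ)+1) + 3) := by
  intro j
  induction j with
  | zero => simp [Eexp]
  | succ j ih =>
    rw [show Eexp t₀ (j+1) = Eexp t₀ j + (1 - t₀ + j) from rfl]
    push_cast
    push_cast at ih
    linear_combination ih

/-- for `q ≠ 1` and `P = Σ_{j=0}^m p_j(M) D_q^j` with `p_m ≠ 0`,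
`P Ψ_{α,s} − (q^{m(m−2s+3)/2}/(α^m (q−1)^m)) p_m(α/q^m) Ψ_{α/q^m,s}` lies in the span of
`{Ψ_{α/q^m,r} : 1 ≤ r < s} ∪ {Ψ_{α/q^i,r} : 0 ≤ i < m, 1 ≤ r ≤ s}`. -/
theorem P_Psi_s_q_ne_one (K : Type*) [Field K] (q : K) (hq : q ≠ 0) (hq1 : q ≠ 1)
    (hqi : ∀ n : ℤ, n ≠ 0 → qInt K q n ≠ 0)
    (m : ℕ) (p : ℕ → K[X]) (hpm : p m ≠ 0)
    (α : K) (hα : α ≠ 0) (s : ℕ) (hs : 1 ≤ s)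
    (Ψ : K → ℕ → ℤ → K) (hΨ : ∀ β : K, β ≠ 0 → IsJordanChain K β (Ψ β)) :
    (∑ j ∈ Finset.range (m + 1), aeval (Mop K) (p j) * Dq K q ^ j) (Ψ α s) -
        ((q ^ (((m : ℤ) * ((m : ℤ) - 2 * (s : ℤ) + 3)) / 2) / (α ^ m * (q - 1) ^ m)) *
          (p m).eval (α / q ^ m)) • Ψ (α / q ^ m) s ∈
      Submodule.span K
        ({x : ℤ → K | ∃ r : ℕ, 1 ≤ r ∧ r < s ∧ x = Ψ (α / q ^ m) r} ∪
         {x : ℤ → K | ∃ i r : ℕ, i < m ∧ 1 ≤ r ∧ r ≤ s ∧ x = Ψ (α / q ^ i) r}) := by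
  classical
  obtain ⟨t₀, rfl⟩ : ∃ t, s = t + 1 := ⟨s - 1, by omega⟩
  have hq1' : q - 1 ≠ 0 := sub_ne_zero.mpr hq1
  have hne : ∀ i : ℕ, α / q ^ i ≠ 0 := fun i => div_ne_zero hα (pow_ne_zero _ hq)
  have hch : ∀ i : ℕ, IsJordanChain K (α / q ^ i) (Ψ (α / q ^ i)) :=
    fun i => hΨ _ (hne i)
  have hstep : ∀ i : ℕ, IsJordanChain K ((α / q ^ i) / q) (Ψ (α / q ^ (i+1))) := by
    intro i
    rw [div_div, ← pow_succ]
    exact hch (i+1)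
  -- target submodules
  set T : ℕ → Submodule K (ℤ → K) := fun j => Submodule.span K
        ({x : ℤ → K | ∃ r : ℕ, 1 ≤ r ∧ r < t₀ + 1 ∧ x = Ψ (α / q ^ j) r} ∪
         {x : ℤ → K | ∃ i r : ℕ, i < j ∧ 1 ≤ r ∧ r ≤ t₀ + 1 ∧ x = Ψ (α / q ^ i) r})
    with hT
  have hWA : ∀ j : ℕ, JCAux.W (Ψ (α / q ^ j)) t₀ ≤ T j := by
    intro j
    rw [JCAux.W, hT]
    apply Submodule.span_mono
    rintro x ⟨r, h1, h2, rfl⟩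
    exact Or.inl ⟨r, h1, by omega, rfl⟩
  have hWB : ∀ j i : ℕ, i < j → JCAux.W (Ψ (α / q ^ i)) (t₀ + 1) ≤ T j := by
    intro j i hij
    rw [JCAux.W, hT]
    apply Submodule.span_mono
    rintro x ⟨r, h1, h2, rfl⟩
    exact Or.inr ⟨i, r, hij, h1, h2, rfl⟩
  have hTmono : ∀ j k : ℕ, j ≤ k → T j ≤ T k := by
    intro j k hjk
    rw [hT]
    apply Submodule.span_le.mpr
    rintro x (⟨r, h1, h2, rfl⟩ | ⟨i, r, hi, h1, h2, rfl⟩)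
    · rcases Nat.lt_or_ge j k with h | h
      · exact Submodule.subset_span (Or.inr ⟨j, r, h, h1, by omega, rfl⟩)
      · have : j = k := by omega
        subst this
        exact Submodule.subset_span (Or.inl ⟨r, h1, h2, rfl⟩)
    · exact Submodule.subset_span (Or.inr ⟨i, r, by omega, h1, h2, rfl⟩)
  have hDqT : ∀ j : ℕ, ∀ x : ℤ → K, x ∈ T j → Dq K q x ∈ T (j+1) := by
    intro j x hx
    rw [hT] at hx
    induction hx using Submodule.span_induction with
    | mem x hx =>
      rcases hx with ⟨r, h1, h2, rfl⟩ | ⟨i, r, hi, h1, h2, rfl⟩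
      · have hmem : Ψ (α / q ^ j) r ∈ JCAux.W (Ψ (α / q ^ j)) r := JCAux.mem_W h1 le_rfl
        have h3 := JCAux.Dq_W q hq hq1 (hne j) (hch j) (hstep j) hmem
        refine SetLike.le_def.mp (sup_le ?_ ?_) h3
        · exact (JCAux.W_mono (by omega)).trans (hWA (j+1))
        · exact (JCAux.W_mono (by omega : r ≤ t₀ + 1)).trans (hWB (j+1) j (by omega))
      · have hmem : Ψ (α / q ^ i) r ∈ JCAux.W (Ψ (α / q ^ i)) r := JCAux.mem_W h1 le_rfl
        have h3 := JCAux.Dq_W q hq hq1 (hne i) (hch i) (hstep i) hmem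
        refine SetLike.le_def.mp (sup_le ?_ ?_) h3
        · exact (JCAux.W_mono (by omega : r ≤ t₀ + 1)).trans (hWB (j+1) (i+1) (by omega))
        · exact (JCAux.W_mono (by omega : r ≤ t₀ + 1)).trans (hWB (j+1) i (by omega))
    | zero => simpa using Submodule.zero_mem _
    | add x y _ _ hx hy => rw [map_add]; exact Submodule.add_mem _ hx hy
    | smul c x _ hx => rw [map_smul]; exact Submodule.smul_mem _ _ hx
  have hPT : ∀ (pp : K[X]) (x : ℤ → K), x ∈ T m → aeval (Mop K) pp x ∈ T m := by
    intro pp x hx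
    rw [hT] at hx
    induction hx using Submodule.span_induction with
    | mem x hx =>
      rcases hx with ⟨r, h1, h2, rfl⟩ | ⟨i, r, hi, h1, h2, rfl⟩
      · have hmem : Ψ (α / q ^ m) r ∈ JCAux.W (Ψ (α / q ^ m)) r := JCAux.mem_W h1 le_rfl
        have h3 := JCAux.aeval_W (hne m) (hch m) pp hmem
        exact ((JCAux.W_mono (by omega : r ≤ t₀)).trans (hWA m)) h3
      · have hmem : Ψ (α / q ^ i) r ∈ JCAux.W (Ψ (α / q ^ i)) r := JCAux.mem_W h1 le_rfl
        have h3 := JCAux.aeval_W (hne i) (hch i) pp hmem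
        exact ((JCAux.W_mono (by omega : r ≤ t₀ + 1)).trans (hWB m i hi)) h3
    | zero => simpa using Submodule.zero_mem _
    | add x y _ _ hx hy => rw [map_add]; exact Submodule.add_mem _ hx hy
    | smul c x _ hx => rw [map_smul]; exact Submodule.smul_mem _ _ hx
  -- main induction
  have key : ∀ j : ℕ, (Dq K q ^ j) (Ψ α (t₀+1))
      - (q ^ Eexp t₀ j / (α ^ j * (q-1) ^ j)) • Ψ (α / q ^ j) (t₀+1) ∈ T j := by
    intro j
    induction j with
    | zero =>
      have : (Dq K q ^ 0) (Ψ α (t₀+1))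
          - (q ^ Eexp t₀ 0 / (α ^ 0 * (q-1) ^ 0)) • Ψ (α / q ^ 0) (t₀+1) = 0 := by
        simp [Eexp]
      rw [this]; exact Submodule.zero_mem _
    | succ j ih =>
      have hu' : (Dq K q ^ j) (Ψ α (t₀+1)) = (q ^ Eexp t₀ j / (α ^ j * (q-1) ^ j))
          • Ψ (α / q ^ j) (t₀+1)
          + ((Dq K q ^ j) (Ψ α (t₀+1)) - (q ^ Eexp t₀ j / (α ^ j * (q-1) ^ j))
              • Ψ (α / q ^ j) (t₀+1)) := by abel
      have hv : Dq K q (Ψ (α / q ^ j) (t₀+1))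
          - (q ^ ((1:ℤ) - t₀) / ((α / q ^ j) * (q-1))) • Ψ (α / q ^ (j+1)) (t₀+1)
          ∈ JCAux.W (Ψ (α / q ^ (j+1))) t₀ ⊔ JCAux.W (Ψ (α / q ^ j)) (t₀+1) := by
        have := JCAux.Dq_step q hq hq1 (hne j) (hch j) (hstep j) t₀
        have heq : (α / q ^ j) / q = α / q ^ (j+1) := by rw [div_div, ← pow_succ]
        convert this using 2
      have hvT : Dq K q (Ψ (α / q ^ j) (t₀+1))
          - (q ^ ((1:ℤ) - t₀) / ((α / q ^ j) * (q-1))) • Ψ (α / q ^ (j+1)) (t₀+1)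
          ∈ T (j+1) := by
        refine SetLike.le_def.mp (sup_le ?_ ?_) hv
        · exact hWA (j+1)
        · exact hWB (j+1) j (by omega)
      have hCc : (q ^ Eexp t₀ j / (α ^ j * (q-1) ^ j))
          * (q ^ ((1:ℤ) - t₀) / ((α / q ^ j) * (q-1)))
          = q ^ Eexp t₀ (j+1) / (α ^ (j+1) * (q-1) ^ (j+1)) := by
        have hE : q ^ Eexp t₀ (j+1) = q ^ Eexp t₀ j * q ^ ((1:ℤ) - t₀) * q ^ (j:ℕ) := by
          rw [show Eexp t₀ (j+1) = Eexp t₀ j + (1 - t₀ + j) from rfl,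
            zpow_add₀ hq, zpow_add₀ hq, zpow_natCast, mul_assoc]
        rw [hE]
        field_simp
        ring
      have hDqpow : (Dq K q ^ (j+1)) (Ψ α (t₀+1))
          = Dq K q ((Dq K q ^ j) (Ψ α (t₀+1))) := by
        rw [pow_succ', Module.End.mul_apply]
      have hsplit : Dq K q (Ψ (α / q ^ j) (t₀+1))
          = (q ^ ((1:ℤ) - t₀) / ((α / q ^ j) * (q-1))) • Ψ (α / q ^ (j+1)) (t₀+1)
          + (Dq K q (Ψ (α / q ^ j) (t₀+1))
             - (q ^ ((1:ℤ) - t₀) / ((α / q ^ j) * (q-1))) • Ψ (α / q ^ (j+1)) (t₀+1)) := by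
        abel
      have hkey2 : (Dq K q ^ (j+1)) (Ψ α (t₀+1))
          - (q ^ Eexp t₀ (j+1) / (α ^ (j+1) * (q-1) ^ (j+1))) • Ψ (α / q ^ (j+1)) (t₀+1)
          = (q ^ Eexp t₀ j / (α ^ j * (q-1) ^ j)) •
              (Dq K q (Ψ (α / q ^ j) (t₀+1))
               - (q ^ ((1:ℤ) - t₀) / ((α / q ^ j) * (q-1))) • Ψ (α / q ^ (j+1)) (t₀+1))
            + Dq K q ((Dq K q ^ j) (Ψ α (t₀+1))
               - (q ^ Eexp t₀ j / (α ^ j * (q-1) ^ j)) • Ψ (α / q ^ j) (t₀+1)) := by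
        rw [hDqpow]
        conv_lhs => rw [hu']
        rw [map_add, map_smul, ← hCc]
        conv_lhs => rw [hsplit]
        rw [smul_add, smul_smul]
        abel
      rw [hkey2]
      exact Submodule.add_mem _ (Submodule.smul_mem _ _ hvT)
        (hDqT j _ (by rw [hT] at ih ⊢; exact ih))
  -- conclude
  have hdiv : ((m : ℤ) * ((m : ℤ) - 2 * ((t₀+1 : ℕ) : ℤ) + 3)) / 2 = Eexp t₀ m := by
    have h2 := two_Eexp t₀ m
    have : ((m : ℤ) * ((m : ℤ) - 2 * ((t₀+1 : ℕ) : ℤ) + 3)) = 2 * Eexp t₀ m := by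
      rw [h2]; push_cast; ring
    rw [this, Int.mul_ediv_cancel_left _ (by norm_num)]
  rw [Finset.sum_range_succ, LinearMap.add_apply, LinearMap.sum_apply]
  simp only [Module.End.mul_apply]
  rw [hdiv, add_sub_assoc]
  apply Submodule.add_mem
  · apply Submodule.sum_mem
    intro j hj
    have hjm : j < m := Finset.mem_range.mp hj
    apply hPT
    have h1 := key j
    have h2 : Ψ (α / q ^ j) (t₀+1) ∈ T m :=
      (hWB m j hjm) (JCAux.mem_W (by omega) le_rfl)
    have h3 : (Dq K q ^ j) (Ψ α (t₀+1)) =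
        ((Dq K q ^ j) (Ψ α (t₀+1)) - (q ^ Eexp t₀ j / (α ^ j * (q-1) ^ j))
          • Ψ (α / q ^ j) (t₀+1))
        + (q ^ Eexp t₀ j / (α ^ j * (q-1) ^ j)) • Ψ (α / q ^ j) (t₀+1) := by abel
    rw [h3]
    exact Submodule.add_mem _ (hTmono j m (by omega) h1) (Submodule.smul_mem _ _ h2)
  · -- leading term
    have hev := JCAux.poly_step (hne m) (hch m) (p m) t₀
    have hu := key m
    have hu' : (Dq K q ^ m) (Ψ α (t₀+1)) = (q ^ Eexp t₀ m / (α ^ m * (q-1) ^ m))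
        • Ψ (α / q ^ m) (t₀+1)
        + ((Dq K q ^ m) (Ψ α (t₀+1)) - (q ^ Eexp t₀ m / (α ^ m * (q-1) ^ m))
            • Ψ (α / q ^ m) (t₀+1)) := by abel
    have hv' : aeval (Mop K) (p m) (Ψ (α / q ^ m) (t₀+1))
        = (p m).eval (α / q ^ m) • Ψ (α / q ^ m) (t₀+1)
        + (aeval (Mop K) (p m) (Ψ (α / q ^ m) (t₀+1))
           - (p m).eval (α / q ^ m) • Ψ (α / q ^ m) (t₀+1)) := by abel
    have hkey3 : aeval (Mop K) (p m) ((Dq K q ^ m) (Ψ α (t₀+1)))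
        - (q ^ Eexp t₀ m / (α ^ m * (q-1) ^ m) * (p m).eval (α / q ^ m))
          • Ψ (α / q ^ m) (t₀+1)
        = (q ^ Eexp t₀ m / (α ^ m * (q-1) ^ m)) •
            (aeval (Mop K) (p m) (Ψ (α / q ^ m) (t₀+1))
             - (p m).eval (α / q ^ m) • Ψ (α / q ^ m) (t₀+1))
          + aeval (Mop K) (p m) ((Dq K q ^ m) (Ψ α (t₀+1))
             - (q ^ Eexp t₀ m / (α ^ m * (q-1) ^ m)) • Ψ (α / q ^ m) (t₀+1)) := by
      conv_lhs => rw [hu']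
      rw [map_add, map_smul]
      conv_lhs => rw [hv']
      rw [smul_add, smul_smul]
      abel
    rw [hkey3]
    refine Submodule.add_mem _ ?_ (hPT _ _ (hu))
    exact Submodule.smul_mem _ _ ((hWA m) hev)
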